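/- Let V be a finite type, M ≥ 1 an integer, w : V → V → ℤ symmetric with |w u v| ≤ M for all u ≠ v, H = 10M, and let w₃ be the three-layer graph on V × Fin 3. Then for all distinct r, v : V, dist_{w₃}((r,0),(v,0)) = H/2 = 5M and dist_{w₃}((r,0),(v,1)) = H + w r v (all values positive integers viewed in ℕ∞). -/

import Mathlib

/-- Weight of a walk starting at `u` and visiting the vertices of `p` in order. -/
def walkWeight {V : Type*} (w : V → V → ℕ∞) : V → List V → ℕ∞
  | _, [] => 0
  | u, x :: xs => w u x + walkWeight w x xs

/-- Shortest-path distance: infimum of weights of walks from `u` to `v`. -/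
noncomputable def gdist {V : Type*} (w : V → V → ℕ∞) (u v : V) : ℕ∞ :=
  ⨅ (p : List V) (_ : (u :: p).getLast (List.cons_ne_nil u p) = v), walkWeight w u p

/-- Eccentricity of a vertex. -/
noncomputable def ecc {V : Type*} (w : V → V → ℕ∞) (v : V) : ℕ∞ :=
  ⨆ u, gdist w v u

/-- Radius. -/
noncomputable def rad {V : Type*} (w : V → V → ℕ∞) : ℕ∞ :=
  ⨅ v, ecc w v

/-- Diameter. -/
noncomputable def diam {V : Type*} (w : V → V → ℕ∞) : ℕ∞ :=
  ⨆ v, ecc w v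

/-- Three-layer graph on `V × Fin 3` (parts A, B, C), with `H = 10 * M`:
within a layer, edges of weight `H / 2 = 5 * M` between distinct vertices;
forward edges (layer `i` to `i + 1`) of weight `H + w u v` for `u ≠ v` and `2 * H` for `u = v`;
backward edges (layer `i` to `i + 2`) of weight `2 * H - w u v` for `u ≠ v` and `H` for `u = v`. -/
def layer3 {V : Type*} [DecidableEq V] (w : V → V → ℤ) (M : ℤ) :
    V × Fin 3 → V × Fin 3 → ℕ∞ := fun p q =>
  if p.1 = q.1 then
    if q.2 = p.2 + 1 then ((20 * M).toNat : ℕ∞)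
    else if q.2 = p.2 + 2 then ((10 * M).toNat : ℕ∞)
    else ⊤
  else
    if q.2 = p.2 then ((5 * M).toNat : ℕ∞)
    else if q.2 = p.2 + 1 then ((10 * M + w p.1 q.1).toNat : ℕ∞)
    else if q.2 = p.2 + 2 then ((20 * M - w p.1 q.1).toNat : ℕ∞)
    else ⊤

lemma walk_lb {V : Type*} (w : V → V → ℕ∞) (t : V) (D : V → ℕ∞)
    (h0 : D t = 0) (he : ∀ a b, D a ≤ w a b + D b) :
    ∀ (p : List V) (u : V), (u :: p).getLast (List.cons_ne_nil u p) = t →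
      D u ≤ walkWeight w u p := by
  intro p
  induction p with
  | nil =>
    intro u hu
    simp at hu
    subst hu
    simp [walkWeight, h0]
  | cons x xs ih =>
    intro u hu
    have h2 : (x :: xs).getLast (List.cons_ne_nil x xs) = t := by
      rwa [List.getLast_cons (List.cons_ne_nil x xs)] at hu
    show D u ≤ w u x + walkWeight w x xs
    calc D u ≤ w u x + D x := he u x
      _ ≤ w u x + walkWeight w x xs := add_le_add_right (ih x h2) _

lemma gdist_lb {V : Type*} (w : V → V → ℕ∞) (t : V) (D : V → ℕ∞)
    (h0 : D t = 0) (he : ∀ a b, D a ≤ w a b + D b) (u : V) :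
    D u ≤ gdist w u t :=
  le_iInf fun p => le_iInf fun hp => walk_lb w t D h0 he p u hp

lemma gdist_ub {V : Type*} (w : V → V → ℕ∞) (u t : V) : gdist w u t ≤ w u t := by
  have h : gdist w u t ≤ walkWeight w u [t] :=
    iInf_le_of_le [t] (iInf_le_of_le (by simp) le_rfl)
  simpa [walkWeight] using h

lemma key0 {a b : ℤ} (h : a ≤ b) : (a.toNat : ℕ∞) ≤ (b.toNat : ℕ∞) := by
  rw [Nat.cast_le]; omega

lemma key {a b c : ℤ} (h : a ≤ b + c) :
    (a.toNat : ℕ∞) ≤ (b.toNat : ℕ∞) + (c.toNat : ℕ∞) := by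
  rw [← Nat.cast_add, Nat.cast_le]; omega

lemma layer3_ge {V : Type*} [DecidableEq V] (w : V → V → ℤ) (M : ℤ) (hM : 1 ≤ M)
    (hbound : ∀ u v : V, u ≠ v → |w u v| ≤ M) (a b : V × Fin 3) :
    ((5 * M).toNat : ℕ∞) ≤ layer3 w M a b := by
  unfold layer3
  split_ifs with h1 h2 h3 h4 h5 h6 <;> try exact le_top
  · exact key0 (by linarith)
  · exact key0 (by linarith)
  · exact key0 le_rfl
  · have := abs_le.mp (hbound a.1 b.1 h1)
    exact key0 (by linarith [this.1])
  · have := abs_le.mp (hbound a.1 b.1 h1)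
    exact key0 (by linarith [this.2])

def D2 {V : Type*} [DecidableEq V] (w : V → V → ℤ) (M : ℤ) (v : V) :
    V × Fin 3 → ℕ∞ := fun p =>
  if p.2 = 0 then (if p.1 = v then ((14 * M).toNat : ℕ∞) else ((10 * M + w p.1 v).toNat : ℕ∞))
  else if p.2 = 1 then (if p.1 = v then 0 else ((5 * M).toNat : ℕ∞))
  else ((9 * M).toNat : ℕ∞)

lemma top_case {x y : ℕ∞} : x ≤ ⊤ + y := by simp

lemma D2_edge {V : Type*} [DecidableEq V] (w : V → V → ℤ) (M : ℤ) (hM : 1 ≤ M) (v : V)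
    (hsymm : ∀ u v : V, w u v = w v u)
    (hbound : ∀ u v : V, u ≠ v → |w u v| ≤ M) :
    ∀ a b, D2 w M v a ≤ layer3 w M a b + D2 w M v b := by
  rintro ⟨u, i⟩ ⟨x, j⟩
  rcases eq_or_ne u x with rfl | hux
  · rcases eq_or_ne u v with rfl | huv
    · fin_cases i <;> fin_cases j <;>
        simp only [layer3, D2] <;>
        norm_num [Fin.ext_iff, Fin.add_def] <;>
        first
          | exact top_case
          | exact zero_le _
          | (apply key; linarith)
          | (apply key0; linarith)
          | (left; linarith)
    · obtain ⟨Ba, Bb⟩ := abs_le.mp (hbound u v huv)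
      have E := hsymm u v
      have hvu := Ne.symm huv
      fin_cases i <;> fin_cases j <;>
        simp only [layer3, D2] <;>
        norm_num [Fin.ext_iff, Fin.add_def, huv, hvu] <;>
        first
          | exact top_case
          | exact zero_le _
          | (apply key; linarith)
          | (apply key0; linarith)
          | (left; linarith)
  · rcases eq_or_ne u v with rfl | huv
    · obtain ⟨Ba, Bb⟩ := abs_le.mp (hbound u x hux)
      have E := hsymm u x
      have hxu := Ne.symm hux
      fin_cases i <;> fin_cases j <;>
        simp only [layer3, D2] <;>
        norm_num [Fin.ext_iff, Fin.add_def, hux, hxu] <;>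
        first
          | exact top_case
          | exact zero_le _
          | (apply key; linarith)
          | (apply key0; linarith)
          | (left; linarith)
    · rcases eq_or_ne x v with rfl | hxv
      · obtain ⟨Ba, Bb⟩ := abs_le.mp (hbound u x hux)
        have E := hsymm u x
        have hxu := Ne.symm hux
        fin_cases i <;> fin_cases j <;>
          simp only [layer3, D2] <;>
          norm_num [Fin.ext_iff, Fin.add_def, hux, hxu] <;>
          first
            | exact top_case
            | exact zero_le _
            | (apply key; linarith)
            | (apply key0; linarith)
            | (left; linarith)
      · obtain ⟨Ba, Bb⟩ := abs_le.mp (hbound u x hux)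
        obtain ⟨Ca, Cb⟩ := abs_le.mp (hbound u v huv)
        obtain ⟨Da, Db⟩ := abs_le.mp (hbound x v hxv)
        have E1 := hsymm u x
        have E2 := hsymm u v
        have E3 := hsymm x v
        have hxu := Ne.symm hux
        have hvu := Ne.symm huv
        have hvx := Ne.symm hxv
        fin_cases i <;> fin_cases j <;>
          simp only [layer3, D2] <;>
          norm_num [Fin.ext_iff, Fin.add_def, hux, hxu, huv, hvu, hxv, hvx] <;>
          first
            | exact top_case
            | exact zero_le _
            | (apply key; linarith)
            | (apply key0; linarith)
            | (left; linarith)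

def D1 {V : Type*} [DecidableEq V] (M : ℤ) (v : V) : V × Fin 3 → ℕ∞ := fun p =>
  if p = (v, 0) then 0 else ((5 * M).toNat : ℕ∞)

lemma D1_edge {V : Type*} [DecidableEq V] (w : V → V → ℤ) (M : ℤ) (hM : 1 ≤ M) (v : V)
    (hbound : ∀ u v : V, u ≠ v → |w u v| ≤ M) :
    ∀ a b, D1 M v a ≤ layer3 w M a b + D1 M v b := by
  intro a b
  by_cases ha : a = (v, 0)
  · simp [D1, ha]
  · by_cases hb : b = (v, 0)
    · simp only [D1, if_neg ha, if_pos hb, add_zero]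
      exact layer3_ge w M hM hbound a b
    · simp only [D1, if_neg ha, if_neg hb]
      exact le_add_self

theorem stmt7 {V : Type*} [Fintype V] [DecidableEq V] (M : ℤ) (hM : 1 ≤ M)
    (w : V → V → ℤ) (hsymm : ∀ u v : V, w u v = w v u)
    (hbound : ∀ u v : V, u ≠ v → |w u v| ≤ M)
    (r v : V) (hrv : r ≠ v) :
    gdist (layer3 w M) (r, 0) (v, 0) = ((5 * M).toNat : ℕ∞) ∧
    gdist (layer3 w M) (r, 0) (v, 1) = ((10 * M + w r v).toNat : ℕ∞) := by
  have hne : (r, (0 : Fin 3)) ≠ (v, 0) := by simp [hrv]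
  constructor
  · apply le_antisymm
    · have h := gdist_ub (layer3 w M) (r, 0) (v, 0)
      refine h.trans_eq ?_
      simp [layer3, hrv]
    · have hD := gdist_lb (layer3 w M) (v, 0) (D1 M v) (by simp [D1])
        (D1_edge w M hM v hbound) (r, 0)
      simpa [D1, hrv] using hD
  · apply le_antisymm
    · have h := gdist_ub (layer3 w M) (r, 0) (v, 1)
      refine h.trans_eq ?_
      simp [layer3, hrv]
    · have hD := gdist_lb (layer3 w M) (v, 1) (D2 w M v) (by simp [D2])
        (D2_edge w M hM v hsymm hbound) (r, 0)
      simpa [D2, hrv] using hD
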